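/- Let ∇ ⊂ ℝ⁴ be defined by 0 ≤ x ≤ 1, 0 ≤ y ≤ 1, 0 ≤ z ≤ 1, 0 ≤ w ≤ 1, 1+y-z-w ≥ 0, z+w-y ≥ 0, z+w-x ≥ 0, 1+x-z-w ≥ 0. For every positive integer n, the number of lattice points in n∇ equals C(n+4,4) + 5·C(n+3,4) + 5·C(n+2,4) + C(n+1,4) = (12n⁴ + 48n³ + 84n² + 72n + 24)/24. -/

import Mathlib

open Pointwise

def nabla : Set (ℝ × ℝ × ℝ × ℝ) :=
  {p : ℝ × ℝ × ℝ × ℝ |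
    0 ≤ p.1 ∧
    p.1 ≤ 1 ∧
    0 ≤ p.2.1 ∧
    p.2.1 ≤ 1 ∧
    0 ≤ p.2.2.1 ∧
    p.2.2.1 ≤ 1 ∧
    0 ≤ p.2.2.2 ∧
    p.2.2.2 ≤ 1 ∧
    0 ≤ 1 + p.2.1 - p.2.2.1 - p.2.2.2 ∧
    0 ≤ p.2.2.1 + p.2.2.2 - p.2.1 ∧
    0 ≤ p.2.2.1 + p.2.2.2 - p.1 ∧
    0 ≤ 1 + p.1 - p.2.2.1 - p.2.2.2}

open Finset

/-! ### Auxiliary lemmas -/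

lemma stmt16_cc2 (k : ℕ) : (k.choose 2 : ℚ) = k*(k-1)/2 := by
  induction k with
  | zero => simp
  | succ m ih =>
    rw [Nat.choose_succ_succ]
    push_cast [ih, Nat.choose_one_right]
    ring

lemma stmt16_cc3 (k : ℕ) : (k.choose 3 : ℚ) = k*(k-1)*(k-2)/6 := by
  induction k with
  | zero => simp
  | succ m ih =>
    rw [Nat.choose_succ_succ]
    push_cast [ih, stmt16_cc2]
    ring

lemma stmt16_cc4 (k : ℕ) : (k.choose 4 : ℚ) = k*(k-1)*(k-2)*(k-3)/24 := by
  induction k with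
  | zero => simp
  | succ m ih =>
    rw [Nat.choose_succ_succ]
    push_cast [ih, stmt16_cc3]
    ring

noncomputable def mybox (N : ℤ) : Finset (ℤ × ℤ × ℤ × ℤ) :=
  ((Icc 0 N) ×ˢ (Icc 0 N) ×ˢ (Icc 0 N) ×ˢ (Icc 0 N)).filter fun v =>
    v.2.1 ≤ v.2.2.1 + v.2.2.2 ∧ v.2.2.1 + v.2.2.2 ≤ N + v.2.1 ∧
    v.1 ≤ v.2.2.1 + v.2.2.2 ∧ v.2.2.1 + v.2.2.2 ≤ N + v.1

lemma stmt16_pair_card (N s : ℤ) :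
    (((Icc 0 N) ×ˢ (Icc 0 N)).filter (fun p : ℤ × ℤ => p.1 + p.2 = s)).card
      = (Icc (max 0 (s - N)) (min N s)).card := by
  refine Finset.card_bij' (fun p _ => p.1) (fun c _ => (c, s - c)) ?_ ?_ ?_ ?_
  · rintro ⟨x, y⟩ hp
    simp only [mem_filter, mem_product, mem_Icc] at hp
    simp only [mem_Icc, max_le_iff, le_min_iff]
    omega
  · intro c hc
    simp only [mem_Icc, max_le_iff, le_min_iff] at hc
    simp only [mem_filter, mem_product, mem_Icc]
    omega
  · rintro ⟨x, y⟩ hp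
    simp only [mem_filter, mem_product, mem_Icc] at hp
    simp only [Prod.mk.injEq, true_and]
    omega
  · intro c hc
    rfl

lemma stmt16_fiber_eq (N s : ℤ) :
    (mybox N).filter (fun v => v.2.2.1 + v.2.2.2 = s)
      = (Icc (max 0 (s - N)) (min N s)) ×ˢ (Icc (max 0 (s - N)) (min N s)) ×ˢ
        (((Icc 0 N) ×ˢ (Icc 0 N)).filter (fun p : ℤ × ℤ => p.1 + p.2 = s)) := by
  ext ⟨a, b, c, d⟩
  simp only [mybox, mem_filter, mem_product, mem_Icc, max_le_iff, le_min_iff]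
  omega

lemma stmt16_mybox_card (N : ℤ) :
    (mybox N).card = ∑ s ∈ Icc 0 (2 * N), ((Icc (max 0 (s - N)) (min N s)).card) ^ 3 := by
  rw [Finset.card_eq_sum_card_fiberwise (f := fun v : ℤ × ℤ × ℤ × ℤ => v.2.2.1 + v.2.2.2)
    (t := Icc 0 (2 * N))]
  · refine Finset.sum_congr rfl fun s _ => ?_
    rw [stmt16_fiber_eq, Finset.card_product, Finset.card_product, stmt16_pair_card]
    ring
  · rintro ⟨a, b, c, d⟩ hv
    simp only [Finset.mem_coe, mybox, mem_filter, mem_product, mem_Icc] at hv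
    simp only [Finset.mem_coe, mem_Icc]
    omega

lemma stmt16_sum_int_to_nat (m : ℕ) (f : ℤ → ℕ) :
    ∑ s ∈ Icc (0:ℤ) (m:ℤ), f s = ∑ i ∈ range (m+1), f (i:ℤ) := by
  refine Finset.sum_bij' (fun s _ => s.toNat) (fun i _ => (i:ℤ)) ?_ ?_ ?_ ?_ ?_
  · intro a ha; simp only [mem_Icc] at ha; simp only [mem_range]; omega
  · intro a ha; simp only [mem_range] at ha; simp only [mem_Icc]; omega
  · intro a ha; simp only [mem_Icc] at ha; simp [Int.toNat_of_nonneg ha.1]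
  · intro a _; simp
  · intro a ha; simp only [mem_Icc] at ha
    rw [Int.toNat_of_nonneg ha.1]

lemma stmt16_cube4 (m : ℕ) : 4 * ∑ i ∈ range m, (i+1)^3 = (m*(m+1))^2 := by
  induction m with
  | zero => simp
  | succ k ih =>
    rw [Finset.sum_range_succ, Nat.mul_add, ih]
    ring

lemma stmt16_sum_eval (n : ℕ) :
    ∑ s ∈ Icc (0:ℤ) (2*(n:ℤ)), ((Icc (max 0 (s-(n:ℤ))) (min (n:ℤ) s)).card)^3
      = ∑ i ∈ range (n+1), (i+1)^3 + ∑ i ∈ range n, (i+1)^3 := by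
  have h2 : ((2*n : ℕ) : ℤ) = 2*(n:ℤ) := by push_cast; ring
  rw [← h2, stmt16_sum_int_to_nat (2*n) (fun s => ((Icc (max 0 (s-(n:ℤ))) (min (n:ℤ) s)).card)^3)]
  have hterm : ∀ i ∈ range (2*n+1),
      ((Icc (max 0 ((i:ℤ)-(n:ℤ))) (min (n:ℤ) (i:ℤ))).card)^3 = (min (i+1) (2*n+1-i))^3 := by
    intro i hi
    simp only [mem_range] at hi
    rw [Int.card_Icc]
    congr 1
    omega
  rw [Finset.sum_congr rfl hterm]
  rw [show 2*n+1 = (n+1) + n by ring, Finset.sum_range_add]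
  congr 1
  · apply Finset.sum_congr rfl
    intro i hi; simp only [mem_range] at hi
    congr 1; omega
  · rw [← Finset.sum_range_reflect (fun j => (j+1)^3) n]
    apply Finset.sum_congr rfl
    intro i hi; simp only [mem_range] at hi
    congr 1; omega

lemma stmt16_mem_key (n : ℕ) (hn : 0 < n) (a b c d : ℤ) :
    (((a:ℝ), (b:ℝ), (c:ℝ), (d:ℝ)) ∈ (n:ℝ) • nabla) ↔
      (0 ≤ a ∧ a ≤ (n:ℤ) ∧ 0 ≤ b ∧ b ≤ (n:ℤ) ∧ 0 ≤ c ∧ c ≤ (n:ℤ) ∧ 0 ≤ d ∧ d ≤ (n:ℤ) ∧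
       0 ≤ (n:ℤ) + b - c - d ∧ 0 ≤ c + d - b ∧ 0 ≤ c + d - a ∧ 0 ≤ (n:ℤ) + a - c - d) := by
  have hn' : (0:ℝ) < n := by exact_mod_cast hn
  have hnne : (n:ℝ) ≠ 0 := ne_of_gt hn'
  rw [Set.mem_smul_set_iff_inv_smul_mem₀ hnne]
  have hp : ((n:ℝ))⁻¹ • ((a:ℝ), (b:ℝ), (c:ℝ), (d:ℝ))
      = ((a/n : ℝ), (b/n : ℝ), (c/n : ℝ), (d/n : ℝ)) := by
    simp [Prod.smul_def, smul_eq_mul, div_eq_inv_mul]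
  rw [hp]
  simp only [nabla, Set.mem_setOf_eq]
  rw [show 1 + (b:ℝ)/n - (c:ℝ)/n - (d:ℝ)/n = ((n:ℝ) + b - c - d)/n by field_simp,
      show (c:ℝ)/n + (d:ℝ)/n - (b:ℝ)/n = ((c:ℝ) + d - b)/n by field_simp,
      show (c:ℝ)/n + (d:ℝ)/n - (a:ℝ)/n = ((c:ℝ) + d - a)/n by field_simp,
      show 1 + (a:ℝ)/n - (c:ℝ)/n - (d:ℝ)/n = ((n:ℝ) + a - c - d)/n by field_simp]
  simp only [le_div_iff₀ hn', div_le_one hn', zero_mul]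
  constructor <;> intro h <;> exact_mod_cast h

theorem stmt16 (n : ℕ) (hn : 0 < n) :
    {v : ℤ × ℤ × ℤ × ℤ | (((v.1 : ℝ), (v.2.1 : ℝ), (v.2.2.1 : ℝ), (v.2.2.2 : ℝ)) : ℝ × ℝ × ℝ × ℝ) ∈ (n : ℝ) • nabla}.ncard
        = Nat.choose (n + 4) 4 + 5 * Nat.choose (n + 3) 4 + 5 * Nat.choose (n + 2) 4 + Nat.choose (n + 1) 4 ∧
      ((Nat.choose (n + 4) 4 + 5 * Nat.choose (n + 3) 4 + 5 * Nat.choose (n + 2) 4 + Nat.choose (n + 1) 4 : ℚ))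
        = (12 * (n : ℚ) ^ 4 + 48 * (n : ℚ) ^ 3 + 84 * (n : ℚ) ^ 2 + 72 * (n : ℚ) ^ 1 + 24) / 24 := by
  constructor
  · have hset : {v : ℤ × ℤ × ℤ × ℤ |
        (((v.1 : ℝ), (v.2.1 : ℝ), (v.2.2.1 : ℝ), (v.2.2.2 : ℝ)) : ℝ × ℝ × ℝ × ℝ) ∈ (n : ℝ) • nabla}
        = ↑(mybox (n:ℤ)) := by
      ext ⟨a, b, c, d⟩
      simp only [Set.mem_setOf_eq, stmt16_mem_key n hn a b c d, Finset.coe_filter, mybox,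
        mem_product, mem_Icc, Set.mem_setOf_eq]
      omega
    rw [hset, Set.ncard_coe_finset, stmt16_mybox_card, stmt16_sum_eval]
    -- now a purely arithmetic identity
    set E : ℕ := ∑ i ∈ range (n+1), (i+1)^3 + ∑ i ∈ range n, (i+1)^3 with hE
    set C : ℕ := Nat.choose (n + 4) 4 + 5 * Nat.choose (n + 3) 4 + 5 * Nat.choose (n + 2) 4 +
      Nat.choose (n + 1) 4 with hC
    have h4E : 4 * E = ((n+1)*(n+2))^2 + (n*(n+1))^2 := by
      rw [hE, Nat.mul_add, stmt16_cube4, stmt16_cube4]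
    have h4C : (4 * C : ℚ) = ((n+1)*(n+2))^2 + ((n:ℚ)*(n+1))^2 := by
      rw [hC]
      push_cast [stmt16_cc4]
      ring
    have h44 : 4 * E = 4 * C := by
      have hq : ((4 * E : ℕ) : ℚ) = ((4 * C : ℕ) : ℚ) := by
        rw [h4E]
        push_cast
        rw [h4C]
      exact_mod_cast hq
    omega
  · push_cast [stmt16_cc4]
    ring
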